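/- Let k ≥ 1 be an integer, let c₁,…,c_k be nonnegative reals with S := Σ_{i=1}^k c_i > 0, and let ℓ be a real with 0 < ℓ ≤ k. Then Σ_{i=1}^k c_i · e^{−ℓ·c_i/S} ≤ e^{−ℓ/k} · S. -/

import Mathlib

open Finset

lemma key_tangent (b t : ℝ) (hb0 : 0 < b) (hb1 : b ≤ 1) (ht : 0 ≤ t) :
    t * Real.exp (-t) ≤ Real.exp (-b) * ((1 - b) * t + b ^ 2) := by
  rcases eq_or_lt_of_le ht with h0 | h0
  · rw [← h0]
    have hb2 : (0:ℝ) ≤ Real.exp (-b) * b ^ 2 := by positivity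
    simpa using hb2
  · have hA : (0:ℝ) < Real.exp (b - t) := Real.exp_pos _
    have h1 : (1 + (t - b)) * Real.exp (b - t) ≤ 1 := by
      have h2 : (t - b) + 1 ≤ Real.exp (t - b) := Real.add_one_le_exp _
      have h3 : Real.exp (t - b) * Real.exp (b - t) = 1 := by
        rw [← Real.exp_add]; norm_num
      nlinarith [mul_le_mul_of_nonneg_right h2 hA.le]
    have hexp : Real.exp (-t) = Real.exp (-b) * Real.exp (b - t) := by
      rw [← Real.exp_add]; ring_nf
    rw [hexp]
    have hpos : 0 < 1 + (t - b) := by linarith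
    have inner : t * Real.exp (b - t) ≤ (1 - b) * t + b ^ 2 := by
      nlinarith [mul_nonneg ht (sub_nonneg.2 h1), sq_nonneg (t - b),
        mul_pos hpos hA, mul_pos h0 hA]
    have hb : (0:ℝ) < Real.exp (-b) := Real.exp_pos _
    calc t * (Real.exp (-b) * Real.exp (b - t))
        = Real.exp (-b) * (t * Real.exp (b - t)) := by ring
      _ ≤ Real.exp (-b) * ((1 - b) * t + b ^ 2) := by
          exact mul_le_mul_of_nonneg_left inner hb.le

/-- One-round contraction inequality for `k`-means∥ with `0 < ℓ ≤ k`: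
`Σᵢ cᵢ · e^{−ℓ·cᵢ/S} ≤ e^{−ℓ/k} · S` where `S = Σᵢ cᵢ > 0`. -/
theorem contraction_small_ell (k : ℕ) (hk : 1 ≤ k) (c : Fin k → ℝ)
    (hc : ∀ i, 0 ≤ c i) (hS : 0 < ∑ i, c i)
    (ℓ : ℝ) (hℓ : 0 < ℓ) (hℓk : ℓ ≤ (k : ℝ)) :
    ∑ i, c i * Real.exp (-ℓ * c i / ∑ j, c j) ≤
      Real.exp (-ℓ / (k : ℝ)) * ∑ i, c i := by
  set S := ∑ i, c i with hSdef
  have hkpos : (0:ℝ) < (k : ℝ) := by exact_mod_cast Nat.pos_of_ne_zero (by omega)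
  set b := ℓ / (k : ℝ) with hbdef
  have hb0 : 0 < b := div_pos hℓ hkpos
  have hb1 : b ≤ 1 := (div_le_one hkpos).2 hℓk
  have hstep : ∀ i, c i * Real.exp (-ℓ * c i / S) ≤
      Real.exp (-b) * ((1 - b) * c i + b ^ 2 * S / ℓ) := by
    intro i
    have ht : 0 ≤ ℓ * c i / S := div_nonneg (mul_nonneg hℓ.le (hc i)) hS.le
    have hkey := key_tangent b (ℓ * c i / S) hb0 hb1 ht
    have hmul := mul_le_mul_of_nonneg_left hkey (le_of_lt (div_pos hS hℓ))
    have heq : -(ℓ * c i / S) = -ℓ * c i / S := by ring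
    calc c i * Real.exp (-ℓ * c i / S)
        = S / ℓ * (ℓ * c i / S * Real.exp (-(ℓ * c i / S))) := by
          rw [heq]; field_simp
      _ ≤ S / ℓ * (Real.exp (-b) * ((1 - b) * (ℓ * c i / S) + b ^ 2)) := hmul
      _ = Real.exp (-b) * ((1 - b) * c i + b ^ 2 * S / ℓ) := by
          field_simp
  have hsum : ∑ i : Fin k, c i * Real.exp (-ℓ * c i / S) ≤
      ∑ i : Fin k, Real.exp (-b) * ((1 - b) * c i + b ^ 2 * S / ℓ) :=
    Finset.sum_le_sum (fun i _ => hstep i)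
  have hrhs : ∑ i : Fin k, Real.exp (-b) * ((1 - b) * c i + b ^ 2 * S / ℓ)
      = Real.exp (-b) * S := by
    rw [← Finset.mul_sum, Finset.sum_add_distrib, ← Finset.mul_sum,
      Finset.sum_const, Finset.card_univ, Fintype.card_fin, ← hSdef]
    have : (k : ℝ) * (b ^ 2 * S / ℓ) = b * S := by
      rw [hbdef]; field_simp
    rw [nsmul_eq_mul, this, hbdef]
    field_simp
    ring
  rw [hrhs] at hsum
  have : Real.exp (-b) = Real.exp (-ℓ / (k:ℝ)) := by rw [hbdef]; ring_nf
  rw [this] at hsum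
  exact hsum
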